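/- Let T > 0 and let a : [0,T] → ℝ be continuous such that the antiperiodic problem u'' + a(t)u = 0, u(0) + u(T) = 0, u'(0) + u'(T) = 0 has a nontrivial solution u ∈ C²([0,T]). Then ∫₀ᵀ a⁺(t) dt > 4/T, where a⁺(t) = max{a(t),0}. -/

import Mathlib

open Set MeasureTheory intervalIntegral

/-- max (a t) 0 is interval integrable if a is. -/
lemma maxZero_intervalIntegrable {a : ℝ → ℝ} {x y : ℝ}
    (h : IntervalIntegrable a volume x y) :
    IntervalIntegrable (fun t => max (a t) 0) volume x y := by
  have : (fun t => max (a t) 0) = fun t => (a t + |a t|) / 2 := by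
    funext t
    rcases le_total (a t) 0 with h' | h'
    · rw [max_eq_right h', abs_of_nonpos h']; ring
    · rw [max_eq_left h', abs_of_nonneg h']; ring
  rw [this]
  exact (h.add h.abs).div_const 2

/-- If a nonnegative function has zero integral, it vanishes at points of continuity
(within the interval minus one exceptional point). -/
lemma zero_of_integral_zero {ξ η p : ℝ} (hξη : ξ < η) {g : ℝ → ℝ}
    (hgi : IntervalIntegrable g volume ξ η)
    (hnn : ∀ t ∈ Icc ξ η, 0 ≤ g t)
    (h0 : (∫ t in ξ..η, g t) = 0)
    {s : ℝ} (hs : s ∈ Icc ξ η) (hsp : s ≠ p)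
    (hc : ContinuousWithinAt g (Icc ξ η \ {p}) s) : g s = 0 := by
  by_contra hne
  have hpos : 0 < g s := lt_of_le_of_ne (hnn s hs) (Ne.symm hne)
  have hev : ∀ᶠ t in nhdsWithin s (Icc ξ η \ {p}), g s / 2 < g t :=
    hc.eventually (eventually_gt_nhds (by linarith))
  rw [Filter.eventually_iff, Metric.mem_nhdsWithin_iff] at hev
  obtain ⟨δ, hδ, hball⟩ := hev
  have hdsp : 0 < dist s p := dist_pos.2 hsp
  set δ' := min δ (dist s p) with hδ'def
  have hδ' : 0 < δ' := lt_min hδ hdsp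
  set lo := max ξ (s - δ' / 2) with hlodef
  set hi := min η (s + δ' / 2) with hhidef
  have hlohi : lo < hi := by
    apply max_lt <;> apply lt_min
    · exact hξη
    · linarith [hs.1]
    · linarith [hs.2]
    · linarith
  have hkey : ∀ t ∈ Icc lo hi, g s / 2 ≤ g t := by
    intro t ht
    have h1 : ξ ≤ t := le_trans (le_max_left _ _) ht.1
    have h2 : t ≤ η := le_trans ht.2 (min_le_left _ _)
    have h3 : s - δ' / 2 ≤ t := le_trans (le_max_right _ _) ht.1
    have h4 : t ≤ s + δ' / 2 := le_trans ht.2 (min_le_right _ _)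
    have hdist : dist t s < δ' := by
      rw [Real.dist_eq, abs_lt]; constructor <;> [linarith; linarith]
    have htp : t ≠ p := by
      intro h
      rw [h, dist_comm] at hdist
      exact absurd (lt_of_lt_of_le hdist (min_le_right δ _)) (lt_irrefl _)
    have : t ∈ Metric.ball s δ ∩ (Icc ξ η \ {p}) :=
      ⟨by rw [Metric.mem_ball]; exact lt_of_lt_of_le hdist (min_le_left _ _),
       ⟨⟨h1, h2⟩, htp⟩⟩
    exact le_of_lt (hball this)
  have hbig : (∫ t in lo..hi, g t) ≤ ∫ t in ξ..η, g t := by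
    apply integral_mono_interval (le_max_left _ _)
      hlohi.le (min_le_left _ _) _ hgi
    filter_upwards [ae_restrict_mem measurableSet_Ioc] with t ht
    exact hnn t ⟨ht.1.le, ht.2⟩
  have hsmall : (hi - lo) * (g s / 2) ≤ ∫ t in lo..hi, g t := by
    have := integral_mono_on hlohi.le (_root_.intervalIntegrable_const (c := g s / 2))
      (hgi.mono_set (uIcc_subset_uIcc
        (by rw [uIcc_of_le hξη.le]; exact ⟨le_max_left _ _, le_trans hlohi.le (min_le_left _ _)⟩)
        (by rw [uIcc_of_le hξη.le]; exact ⟨le_trans (le_max_left _ _) hlohi.le, min_le_left _ _⟩)))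
      hkey
    rw [intervalIntegral.integral_const] at this
    simpa [smul_eq_mul] using this
  have : 0 < (hi - lo) * (g s / 2) := mul_pos (by linarith) (by linarith)
  linarith [hbig, hsmall, h0.le, h0.ge]

/-- FTC for u' whose derivative is -(a u) except possibly at one point p. -/
lemma ftc_aux {c d p : ℝ} {a u u' : ℝ → ℝ}
    (hu' : ContinuousOn u' (Icc c d))
    (hd2 : ∀ t ∈ Ioo c d, t ≠ p → HasDerivAt u' (-(a t * u t)) t)
    (hint : IntervalIntegrable (fun t => a t * u t) volume c d)
    {x y : ℝ} (hx : c ≤ x) (hxy : x ≤ y) (hy : y ≤ d) :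
    (∫ t in x..y, -(a t * u t)) = u' y - u' x := by
  have hcd : c ≤ d := hx.trans (hxy.trans hy)
  have hsub : ∀ z w : ℝ, x ≤ z → z ≤ w → w ≤ y → p ∉ Ioo z w →
      (∫ t in z..w, -(a t * u t)) = u' w - u' z := by
    intro z w hz hzw hw hnp
    apply integral_eq_sub_of_hasDeriv_right_of_le hzw
      (hu'.mono (Icc_subset_Icc (hx.trans hz) ((hw.trans hy))))
    · intro t ht
      have htcd : t ∈ Ioo c d :=
        ⟨lt_of_le_of_lt (hx.trans hz) ht.1, lt_of_lt_of_le ht.2 (hw.trans hy)⟩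
      have htp : t ≠ p := fun h => hnp (h ▸ ht)
      exact (hd2 t htcd htp).hasDerivWithinAt
    · refine (hint.mono_set (uIcc_subset_uIcc ?_ ?_)).neg <;>
        rw [uIcc_of_le hcd]
      · exact ⟨hx.trans hz, (hzw.trans hw).trans hy⟩
      · exact ⟨hx.trans (hz.trans hzw), hw.trans hy⟩
  set m := min y (max x p) with hm
  have hxm : x ≤ m := le_min hxy (le_max_left _ _)
  have hmy : m ≤ y := min_le_left _ _
  have h1 : (∫ t in x..m, -(a t * u t)) = u' m - u' x := by
    apply hsub x m le_rfl hxm hmy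
    rintro ⟨hp1, hp2⟩
    have : p < max x p := lt_of_lt_of_le hp2 (min_le_right y (max x p))
    rcases max_cases x p with ⟨he, _⟩ | ⟨he, _⟩
    · rw [he] at this; exact absurd hp1 (not_lt_of_gt this)
    · rw [he] at this; exact lt_irrefl p this
  have h2 : (∫ t in m..y, -(a t * u t)) = u' y - u' m := by
    apply hsub m y hxm hmy le_rfl
    rintro ⟨hp1, hp2⟩
    rcases min_lt_iff.1 hp1 with h | h
    · exact absurd hp2 (not_lt_of_gt h)
    · exact absurd (le_max_right x p) (not_le_of_gt h)
  rw [← integral_add_adjacent_intervals (f := fun t => -(a t * u t)) (a := x) (b := m) (c := y)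
    ?_ ?_, h1, h2]
  · ring
  · refine (hint.mono_set (uIcc_subset_uIcc ?_ ?_)).neg <;> rw [uIcc_of_le hcd]
    · exact ⟨hx, hxy.trans hy⟩
    · exact ⟨hx.trans hxm, hmy.trans hy⟩
  · refine (hint.mono_set (uIcc_subset_uIcc ?_ ?_)).neg <;> rw [uIcc_of_le hcd]
    · exact ⟨hx.trans hxm, hmy.trans hy⟩
    · exact ⟨hx.trans hxy, hy⟩

lemma lyap_aux {c d p M τ : ℝ} {a u u' : ℝ → ℝ}
    (hcd : c < d)
    (ha : ContinuousOn a (Icc c d \ {p}))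
    (haint : IntervalIntegrable a volume c d)
    (hu : ContinuousOn u (Icc c d))
    (hu' : ContinuousOn u' (Icc c d))
    (hd1 : ∀ t ∈ Ioo c d, HasDerivAt u (u' t) t)
    (hd2 : ∀ t ∈ Ioo c d, t ≠ p → HasDerivAt u' (-(a t * u t)) t)
    (h0 : u c = 0) (h1 : u d = 0)
    (hτ : τ ∈ Ioo c d) (huτ : u τ = M) (hM : 0 < M)
    (hMb : ∀ t ∈ Icc c d, u t ≤ M)
    (hcon : (∫ t in c..d, max (a t) 0) ≤ 4 / (d - c)) : False := by
  have huτ0 : u τ ≠ 0 := by rw [huτ]; exact hM.ne'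
  -- last zero before τ
  set Z1 := Icc c τ ∩ u ⁻¹' {0} with hZ1
  have hZ1closed : IsClosed Z1 :=
    (hu.mono (Icc_subset_Icc_right hτ.2.le)).preimage_isClosed_of_isClosed
      isClosed_Icc isClosed_singleton
  have hZ1ne : Z1.Nonempty := ⟨c, ⟨le_refl c, hτ.1.le⟩, by simpa using h0⟩
  have hZ1bdd : BddAbove Z1 := BddAbove.mono inter_subset_left bddAbove_Icc
  set c₁ := sSup Z1 with hc₁def
  have hc₁mem := hZ1closed.csSup_mem hZ1ne hZ1bdd
  have hc₁Icc : c₁ ∈ Icc c τ := hc₁mem.1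
  have huc₁ : u c₁ = 0 := hc₁mem.2
  have hc₁τ : c₁ < τ := lt_of_le_of_ne hc₁Icc.2 (fun h => huτ0 (h ▸ huc₁))
  have hc₁max : ∀ z ∈ Z1, z ≤ c₁ := fun z hz => le_csSup hZ1bdd hz
  -- first zero after τ
  set Z2 := Icc τ d ∩ u ⁻¹' {0} with hZ2
  have hZ2closed : IsClosed Z2 :=
    (hu.mono (Icc_subset_Icc_left hτ.1.le)).preimage_isClosed_of_isClosed
      isClosed_Icc isClosed_singleton
  have hZ2ne : Z2.Nonempty := ⟨d, ⟨hτ.2.le, le_refl d⟩, by simpa using h1⟩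
  have hZ2bdd : BddBelow Z2 := BddBelow.mono inter_subset_left bddBelow_Icc
  set d₁ := sInf Z2 with hd₁def
  have hd₁mem := hZ2closed.csInf_mem hZ2ne hZ2bdd
  have hd₁Icc : d₁ ∈ Icc τ d := hd₁mem.1
  have hud₁ : u d₁ = 0 := hd₁mem.2
  have hτd₁ : τ < d₁ := lt_of_le_of_ne hd₁Icc.1 (fun h => huτ0 (by rw [h]; exact hud₁))
  have hd₁min : ∀ z ∈ Z2, d₁ ≤ z := fun z hz => csInf_le hZ2bdd hz
  have hcc₁ : c ≤ c₁ := hc₁Icc.1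
  have hd₁d : d₁ ≤ d := hd₁Icc.2
  -- u is positive on (c₁, d₁)
  have hupos : ∀ t ∈ Ioo c₁ d₁, 0 < u t := by
    rintro t ⟨ht1, ht2⟩
    rcases lt_trichotomy (u t) 0 with hlt | heq | hpos
    · rcases lt_trichotomy t τ with htτ | rfl | hτt
      · have h0mem : (0 : ℝ) ∈ Ioo (u t) (u τ) := ⟨hlt, by rw [huτ]; exact hM⟩
        obtain ⟨z, hzI, hz0⟩ := intermediate_value_Ioo htτ.le
          (hu.mono (Icc_subset_Icc (hcc₁.trans ht1.le) hτ.2.le)) h0mem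
        have : z ≤ c₁ := hc₁max z ⟨⟨hcc₁.trans (ht1.trans hzI.1).le, hzI.2.le⟩, hz0⟩
        linarith [hzI.1]
      · exact absurd huτ (by rw [← huτ] at hM; exact fun _ => absurd hlt (not_lt.2 (by linarith)))
      · have h0mem : (0 : ℝ) ∈ Ioo (u t) (u τ) := ⟨hlt, by rw [huτ]; exact hM⟩
        obtain ⟨z, hzI, hz0⟩ := intermediate_value_Ioo' hτt.le
          (hu.mono (Icc_subset_Icc hτ.1.le (ht2.le.trans hd₁d))) h0mem
        have : d₁ ≤ z := hd₁min z ⟨⟨hzI.1.le, (hzI.2.le.trans ht2.le).trans hd₁d⟩, hz0⟩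
        linarith [hzI.2]
    · rcases le_or_gt t τ with h | h
      · have : t ≤ c₁ := hc₁max t ⟨⟨hcc₁.trans ht1.le, h⟩, heq⟩
        linarith
      · have : d₁ ≤ t := hd₁min t ⟨⟨h.le, ht2.le.trans hd₁d⟩, heq⟩
        linarith
    · exact hpos
  have hunn : ∀ t ∈ Icc c₁ d₁, 0 ≤ u t := by
    intro t ht
    rcases eq_or_lt_of_le ht.1 with rfl | h1
    · exact huc₁.ge
    rcases eq_or_lt_of_le ht.2 with rfl | h2
    · exact hud₁.ge
    exact (hupos t ⟨h1, h2⟩).le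
  -- mean value theorem helper
  have hmvt : ∀ x y : ℝ, c ≤ x → x < y → y ≤ d →
      ∃ ζ ∈ Ioo x y, u' ζ = (u y - u x) / (y - x) := by
    intro x y hx hxy hy
    exact exists_hasDerivAt_eq_slope u u' hxy (hu.mono (Icc_subset_Icc hx hy))
      (fun t ht => hd1 t ⟨lt_of_le_of_lt hx ht.1, lt_of_lt_of_le ht.2 hy⟩)
  -- integrability helpers
  have hAUint : ∀ x y : ℝ, c ≤ x → x ≤ y → y ≤ d →
      IntervalIntegrable (fun t => a t * u t) volume x y := by
    intro x y hx hxy hy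
    refine (haint.mono_set ?_).mul_continuousOn (hu.mono ?_)
    · apply uIcc_subset_uIcc <;> rw [uIcc_of_le hcd.le]
      · exact ⟨hx, hxy.trans hy⟩
      · exact ⟨hx.trans hxy, hy⟩
    · rw [uIcc_of_le hxy]; exact Icc_subset_Icc hx hy
  have hPint : ∀ x y : ℝ, c ≤ x → x ≤ y → y ≤ d →
      IntervalIntegrable (fun t => max (a t) 0) volume x y := by
    intro x y hx hxy hy
    refine maxZero_intervalIntegrable (haint.mono_set ?_)
    apply uIcc_subset_uIcc <;> rw [uIcc_of_le hcd.le]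
    · exact ⟨hx, hxy.trans hy⟩
    · exact ⟨hx.trans hxy, hy⟩
  -- pointwise bound
  have hptwise : ∀ t ∈ Icc c₁ d₁, a t * u t ≤ M * max (a t) 0 := by
    intro t ht
    have h0u : 0 ≤ u t := hunn t ht
    have huM : u t ≤ M := hMb t ⟨hcc₁.trans ht.1, ht.2.trans hd₁d⟩
    rcases le_or_gt (a t) 0 with h | h
    · have : a t * u t ≤ 0 := mul_nonpos_iff.2 (Or.inr ⟨h, h0u⟩)
      have h2 : 0 ≤ M * max (a t) 0 := mul_nonneg hM.le (le_max_right _ _)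
      linarith
    · rw [max_eq_left h.le]
      nlinarith
  -- main chain
  have main : ∀ x y : ℝ, c₁ < x → x ≤ y → y < d₁ → u x = M → u y = M →
      ∃ ζ₁ ζ₂ : ℝ, ζ₁ ∈ Ioo c₁ x ∧ ζ₂ ∈ Ioo y d₁ ∧
        (∫ t in ζ₁..ζ₂, a t * u t) = M / (x - c₁) + M / (d₁ - y) ∧
        (∫ t in ζ₁..ζ₂, a t * u t) ≤ M * ∫ t in ζ₁..ζ₂, max (a t) 0 ∧
        M * (∫ t in ζ₁..ζ₂, max (a t) 0) ≤ M * (4 / (d - c)) := by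
    intro x y hcx hxy hyd hux huy
    obtain ⟨ζ₁, hζ₁, hsl₁⟩ := hmvt c₁ x hcc₁ hcx (le_trans (hxy.trans hyd.le) hd₁d)
    obtain ⟨ζ₂, hζ₂, hsl₂⟩ := hmvt y d₁ (hcc₁.trans (hcx.le.trans hxy)) hyd hd₁d
    have hζζ : ζ₁ < ζ₂ := lt_trans (lt_of_lt_of_le hζ₁.2 hxy) hζ₂.1
    have hcζ₁ : c ≤ ζ₁ := hcc₁.trans hζ₁.1.le
    have hζ₂d : ζ₂ ≤ d := hζ₂.2.le.trans hd₁d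
    have hftc := ftc_aux hu' hd2 (hAUint c d le_rfl hcd.le le_rfl) hcζ₁ hζζ.le hζ₂d
    have hval₁ : u' ζ₁ = M / (x - c₁) := by rw [hsl₁, hux, huc₁, sub_zero]
    have hval₂ : u' ζ₂ = -(M / (d₁ - y)) := by
      rw [hsl₂, hud₁, huy]; ring
    have hfeq : (∫ t in ζ₁..ζ₂, a t * u t) = M / (x - c₁) + M / (d₁ - y) := by
      have := hftc
      rw [intervalIntegral.integral_neg] at this
      rw [hval₁, hval₂] at this
      linarith
    refine ⟨ζ₁, ζ₂, hζ₁, hζ₂, hfeq, ?_, ?_⟩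
    · have hmono := integral_mono_on hζζ.le (hAUint ζ₁ ζ₂ hcζ₁ hζζ.le hζ₂d)
        ((hPint ζ₁ ζ₂ hcζ₁ hζζ.le hζ₂d).const_mul M)
        (fun t ht => hptwise t ⟨hζ₁.1.le.trans ht.1, ht.2.trans hζ₂.2.le⟩)
      rwa [intervalIntegral.integral_const_mul] at hmono
    · refine mul_le_mul_of_nonneg_left ?_ hM.le
      refine le_trans (integral_mono_interval hcζ₁ hζζ.le hζ₂d
        (Filter.Eventually.of_forall (fun t => le_max_right _ _))
        (hPint c d le_rfl hcd.le le_rfl)) hcon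
  -- algebra helper
  have halg : ∀ x y : ℝ, 0 < x → 0 < y → 4 * M / (x + y) ≤ M / x + M / y := by
    intro x y hx hy
    rw [div_add_div _ _ hx.ne' hy.ne', div_le_div_iff₀ (by positivity) (by positivity)]
    nlinarith [mul_nonneg hM.le (sq_nonneg (x - y))]
  have hd₁c₁ : (0:ℝ) < d₁ - c₁ := by linarith
  have h44 : M * (4 / (d - c)) ≤ 4 * M / (d₁ - c₁) := by
    rw [show M * (4 / (d - c)) = 4 * M / (d - c) by ring]
    exact div_le_div_of_nonneg_left (by positivity) hd₁c₁ (by linarith)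
  -- first application, at τ
  obtain ⟨ξ, η, hξ, hη, hfeq, hineq1, hineq2⟩ := main τ τ hc₁τ le_rfl hτd₁ huτ huτ
  have hξη : ξ < η := hξ.2.trans hη.1
  have hlow : 4 * M / (d₁ - c₁) ≤ M / (τ - c₁) + M / (d₁ - τ) := by
    have := halg (τ - c₁) (d₁ - τ) (by linarith) (by linarith)
    have he : τ - c₁ + (d₁ - τ) = d₁ - c₁ := by ring
    rwa [he] at this
  have hauM : (∫ t in ξ..η, a t * u t) = M * ∫ t in ξ..η, max (a t) 0 :=
    le_antisymm hineq1 (by linarith)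
  have hIpos : 0 < ∫ t in ξ..η, max (a t) 0 := by
    by_contra hle
    push_neg at hle
    have : M * (∫ t in ξ..η, max (a t) 0) ≤ 0 := mul_nonpos_iff.2 (Or.inl ⟨hM.le, hle⟩)
    have h4pos : (0:ℝ) < 4 * M / (d₁ - c₁) := by positivity
    linarith
  -- pointwise equality where a is continuous
  have hgzero : ∀ s ∈ Icc ξ η, s ≠ p → M * max (a s) 0 - a s * u s = 0 := by
    have hsub' : Icc ξ η \ {p} ⊆ Icc c d \ {p} :=
      diff_subset_diff_left (Icc_subset_Icc (hcc₁.trans hξ.1.le) (hη.2.le.trans hd₁d))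
    have hcont : ContinuousOn (fun t => M * max (a t) 0 - a t * u t) (Icc ξ η \ {p}) :=
      (continuousOn_const.fun_mul
        (ContinuousOn.sup (ha.mono hsub') continuousOn_const)).fun_sub
        ((ha.mono hsub').fun_mul (hu.mono (hsub'.trans diff_subset)))
    intro s hs hsp
    refine zero_of_integral_zero (g := fun t => M * max (a t) 0 - a t * u t) hξη ?_ ?_ ?_ hs hsp (hcont s ⟨hs, hsp⟩)
    · exact ((hPint ξ η (hcc₁.trans hξ.1.le) hξη.le (hη.2.le.trans hd₁d)).const_mul M).sub
        (hAUint ξ η (hcc₁.trans hξ.1.le) hξη.le (hη.2.le.trans hd₁d))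
    · intro t ht
      have := hptwise t ⟨hξ.1.le.trans ht.1, ht.2.trans hη.2.le⟩
      show 0 ≤ M * max (a t) 0 - a t * u t
      linarith
    · rw [intervalIntegral.integral_sub, intervalIntegral.integral_const_mul, hauM]
      · ring
      · exact (hPint ξ η (hcc₁.trans hξ.1.le) hξη.le (hη.2.le.trans hd₁d)).const_mul M
      · exact hAUint ξ η (hcc₁.trans hξ.1.le) hξη.le (hη.2.le.trans hd₁d)
  -- the set where a is positive
  set S := {s : ℝ | s ∈ Icc ξ η ∧ s ≠ p ∧ 0 < a s} with hSdef
  have hSsub : S ⊆ Icc ξ η := fun s hs => hs.1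
  have hSIcc : S ⊆ Icc c d :=
    fun s hs => ⟨hcc₁.trans (hξ.1.le.trans hs.1.1), (hs.1.2.trans hη.2.le).trans hd₁d⟩
  have hSuM : ∀ s ∈ S, u s = M := by
    rintro s ⟨hsI, hsp, hsa⟩
    have hg := hgzero s hsI hsp
    rw [max_eq_left hsa.le] at hg
    have : a s * u s = a s * M := by linarith
    exact mul_left_cancel₀ hsa.ne' this
  have hSne : S.Nonempty := by
    by_contra hS
    rw [Set.not_nonempty_iff_eq_empty] at hS
    have hae : ∀ᵐ t ∂(volume.restrict (Icc ξ η)), max (a t) 0 ≤ (0:ℝ) := by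
      refine ae_iff.2 ?_
      rw [Measure.restrict_apply' measurableSet_Icc]
      refine measure_mono_null ?_ (Real.volume_singleton (a := p))
      rintro t ⟨ht1, ht2⟩
      simp only [mem_setOf_eq, not_le] at ht1
      have hta : 0 < a t := by
        rcases max_cases (a t) (0:ℝ) with ⟨he, _⟩ | ⟨he, _⟩
        · rwa [he] at ht1
        · rw [he] at ht1; exact absurd ht1 (lt_irrefl 0)
      by_contra htp
      have : t ∈ S := ⟨ht2, htp, hta⟩
      rw [hS] at this
      exact this
    have hle : (∫ t in ξ..η, max (a t) 0) ≤ ∫ _ in ξ..η, (0:ℝ) :=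
      integral_mono_ae_restrict hξη.le
        (hPint ξ η (hcc₁.trans hξ.1.le) hξη.le (hη.2.le.trans hd₁d))
        intervalIntegrable_const hae
    simp only [intervalIntegral.integral_zero] at hle
    linarith
  have hSbddb : BddBelow S := BddBelow.mono hSsub bddBelow_Icc
  have hSbdda : BddAbove S := BddAbove.mono hSsub bddAbove_Icc
  set s₁ := sInf S with hs₁def
  set s₂ := sSup S with hs₂def
  have hs₁ξ : ξ ≤ s₁ := le_csInf hSne (fun s hs => hs.1.1)
  have hs₂η : s₂ ≤ η := csSup_le hSne (fun s hs => hs.1.2)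
  have hCclosed : IsClosed (Icc c d ∩ u ⁻¹' {M}) :=
    hu.preimage_isClosed_of_isClosed isClosed_Icc isClosed_singleton
  have hSC : S ⊆ Icc c d ∩ u ⁻¹' {M} := fun s hs => ⟨hSIcc hs, by simpa using hSuM s hs⟩
  have hclos : closure S ⊆ Icc c d ∩ u ⁻¹' {M} := hCclosed.closure_subset_iff.2 hSC
  have hus₁ : u s₁ = M := by
    have := hclos (csInf_mem_closure hSne hSbddb)
    simpa using this.2
  have hus₂ : u s₂ = M := by
    have := hclos (csSup_mem_closure hSne hSbdda)
    simpa using this.2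
  -- s₁ < s₂
  have hs₁s₂ : s₁ < s₂ := by
    obtain ⟨s₀, hs₀⟩ := hSne
    have hcont₀ : ContinuousWithinAt a (Icc c d \ {p}) s₀ := ha s₀ ⟨hSIcc hs₀, hs₀.2.1⟩
    have hev : ∀ᶠ t in nhdsWithin s₀ (Icc c d \ {p}), 0 < a t :=
      hcont₀.eventually (eventually_gt_nhds hs₀.2.2)
    rw [Filter.eventually_iff, Metric.mem_nhdsWithin_iff] at hev
    obtain ⟨δ, hδ, hball⟩ := hev
    have hdsp : 0 < dist s₀ p := dist_pos.2 hs₀.2.1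
    set δ' := min δ (dist s₀ p) with hδ'def
    have hδ' : 0 < δ' := lt_min hδ hdsp
    set lo := max ξ (s₀ - δ' / 2) with hlodef
    set hi := min η (s₀ + δ' / 2) with hhidef
    have hlohi : lo < hi := by
      apply max_lt <;> apply lt_min
      · exact hξη
      · linarith [hs₀.1.1]
      · linarith [hs₀.1.2]
      · linarith
    have hIccS : Icc lo hi ⊆ S := by
      intro t ht
      have h1 : ξ ≤ t := le_trans (le_max_left _ _) ht.1
      have h2 : t ≤ η := le_trans ht.2 (min_le_left _ _)
      have h3 : s₀ - δ' / 2 ≤ t := le_trans (le_max_right _ _) ht.1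
      have h4 : t ≤ s₀ + δ' / 2 := le_trans ht.2 (min_le_right _ _)
      have hdist : dist t s₀ < δ' := by
        rw [Real.dist_eq, abs_lt]; constructor <;> [linarith; linarith]
      have htp : t ≠ p := by
        intro h
        rw [h, dist_comm] at hdist
        exact absurd (lt_of_lt_of_le hdist (min_le_right δ _)) (lt_irrefl _)
      have hta : 0 < a t := hball ⟨Metric.mem_ball.2 (lt_of_lt_of_le hdist (min_le_left _ _)),
        ⟨⟨hcc₁.trans (hξ.1.le.trans h1), (h2.trans hη.2.le).trans hd₁d⟩, htp⟩⟩
      exact ⟨⟨h1, h2⟩, htp, hta⟩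
    have h1 : s₁ ≤ lo := csInf_le hSbddb (hIccS ⟨le_rfl, hlohi.le⟩)
    have h2 : hi ≤ s₂ := le_csSup hSbdda (hIccS ⟨hlohi.le, le_rfl⟩)
    linarith
  -- second application, at s₁ and s₂
  have hc₁s₁ : c₁ < s₁ := lt_of_lt_of_le hξ.1 hs₁ξ
  have hs₂d₁ : s₂ < d₁ := lt_of_le_of_lt hs₂η hη.2
  obtain ⟨ξ₂, η₂, _, _, hfeq2, hineq12, hineq22⟩ := main s₁ s₂ hc₁s₁ hs₁s₂.le hs₂d₁ hus₁ hus₂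
  have hlow2 : 4 * M / (s₁ - c₁ + (d₁ - s₂)) ≤ M / (s₁ - c₁) + M / (d₁ - s₂) :=
    halg (s₁ - c₁) (d₁ - s₂) (by linarith) (by linarith)
  have hstrict : 4 * M / (d₁ - c₁) < 4 * M / (s₁ - c₁ + (d₁ - s₂)) := by
    apply div_lt_div_of_pos_left (by positivity) (by linarith) (by linarith)
  linarith

lemma lyap {c d p : ℝ} {a u u' : ℝ → ℝ} (hcd : c < d)
    (ha : ContinuousOn a (Icc c d \ {p}))
    (haint : IntervalIntegrable a volume c d)
    (hu'c : ContinuousOn u' (Icc c d))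
    (hd1 : ∀ t ∈ Icc c d, HasDerivWithinAt u (u' t) (Icc c d) t)
    (hd2 : ∀ t ∈ Icc c d, t ≠ p → HasDerivWithinAt u' (-(a t * u t)) (Icc c d) t)
    (h0 : u c = 0) (h1 : u d = 0) (hne : ∃ t ∈ Icc c d, u t ≠ 0) :
    4 / (d - c) < ∫ t in c..d, max (a t) 0 := by
  by_contra hlt
  push_neg at hlt
  have hu : ContinuousOn u (Icc c d) := fun t ht => (hd1 t ht).continuousWithinAt
  have hd1' : ∀ t ∈ Ioo c d, HasDerivAt u (u' t) t := fun t ht =>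
    (hd1 t (Ioo_subset_Icc_self ht)).hasDerivAt (Icc_mem_nhds ht.1 ht.2)
  have hd2' : ∀ t ∈ Ioo c d, t ≠ p → HasDerivAt u' (-(a t * u t)) t := fun t ht htp =>
    (hd2 t (Ioo_subset_Icc_self ht) htp).hasDerivAt (Icc_mem_nhds ht.1 ht.2)
  obtain ⟨τ, hτIcc, hτmax⟩ := isCompact_Icc.exists_isMaxOn (nonempty_Icc.2 hcd.le) hu.abs
  obtain ⟨t₀, ht₀, hut₀⟩ := hne
  have hM : 0 < |u τ| := lt_of_lt_of_le (abs_pos.2 hut₀) (hτmax ht₀)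
  have hτ0 : u τ ≠ 0 := abs_pos.1 hM
  have hτIoo : τ ∈ Ioo c d := by
    refine ⟨lt_of_le_of_ne hτIcc.1 ?_, lt_of_le_of_ne hτIcc.2 ?_⟩
    · intro h; exact hτ0 (by rw [← h]; exact h0)
    · intro h; exact hτ0 (by rw [h]; exact h1)
  rcases abs_cases (u τ) with ⟨habs, _⟩ | ⟨habs, _⟩
  · exact lyap_aux hcd ha haint hu hu'c hd1' hd2' h0 h1 hτIoo habs.symm hM
      (fun t ht => le_trans (le_abs_self _) (hτmax ht)) hlt
  · -- u τ < 0 : use -u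
    refine lyap_aux (u := fun t => -u t) (u' := fun t => -u' t) (M := |u τ|) (τ := τ)
      hcd ha haint hu.neg hu'c.neg
      (fun t ht => (hd1' t ht).neg) (fun t ht htp => ?_)
      (by simp [h0]) (by simp [h1]) hτIoo (by simp [habs])
      hM (fun t ht => le_trans (neg_le_abs _) (hτmax ht)) hlt
    have := (hd2' t ht htp).neg
    convert this using 1
    all_goals first | rfl | ring

theorem stmt12 (T : ℝ) (hT : 0 < T) (a : ℝ → ℝ)
    (ha : ContinuousOn a (Set.Icc 0 T))
    (u u' : ℝ → ℝ)
    (hd1 : ∀ t ∈ Set.Icc (0:ℝ) T, HasDerivWithinAt u (u' t) (Set.Icc 0 T) t)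
    (hd2 : ∀ t ∈ Set.Icc (0:ℝ) T, HasDerivWithinAt u' (-(a t * u t)) (Set.Icc 0 T) t)
    (hbc1 : u 0 + u T = 0) (hbc2 : u' 0 + u' T = 0)
    (hne : ∃ t ∈ Set.Icc (0:ℝ) T, u t ≠ 0) :
    4 / T < ∫ t in (0:ℝ)..T, max (a t) 0 := by
  set U : ℝ → ℝ := fun t => if t ≤ T then u t else -u (t - T) with hUdef
  set V : ℝ → ℝ := fun t => if t ≤ T then u' t else -u' (t - T) with hVdef
  set A : ℝ → ℝ := fun t => if t ≤ T then a t else a (t - T) with hAdef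
  have hu0T : u 0 = -u T := by linarith
  have hu'0T : u' 0 = -u' T := by linarith
  have hUl : ∀ t ≤ T, U t = u t := fun t ht => if_pos ht
  have hVl : ∀ t ≤ T, V t = u' t := fun t ht => if_pos ht
  have hAl : ∀ t ≤ T, A t = a t := fun t ht => if_pos ht
  have hAr : ∀ s ∈ Ioi T, A s = a (s - T) := fun s hs => if_neg (not_le.2 hs)
  have hUr : ∀ t ∈ Icc T (2 * T), U t = -u (t - T) := by
    intro t ht
    rcases eq_or_lt_of_le ht.1 with heq | h
    · rw [← heq, hUl T le_rfl, sub_self, hu0T, neg_neg]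
    · exact if_neg (not_le.2 h)
  have hVr : ∀ t ∈ Icc T (2 * T), V t = -u' (t - T) := by
    intro t ht
    rcases eq_or_lt_of_le ht.1 with heq | h
    · rw [← heq, hVl T le_rfl, sub_self, hu'0T, neg_neg]
    · exact if_neg (not_le.2 h)
  have hmaps : MapsTo (fun s => s - T) (Icc T (2 * T)) (Icc (0:ℝ) T) := by
    intro s hs
    have : s - T ∈ Icc (0:ℝ) T := ⟨by linarith [hs.1], by linarith [hs.2]⟩
    exact this
  -- derivative of U on the right piece
  have hUder_r : ∀ t ∈ Icc T (2 * T), HasDerivWithinAt U (-u' (t - T)) (Icc T (2 * T)) t := by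
    intro t ht
    have hmem : t - T ∈ Icc (0:ℝ) T := hmaps ht
    have hcomp : HasDerivWithinAt (fun s => u (s - T)) (u' (t - T) * 1) (Icc T (2 * T)) t :=
      HasDerivWithinAt.comp_of_eq (hh₂ := hd1 (t - T) hmem)
        (hh := (hasDerivWithinAt_id t _).sub_const T) (hst := hmaps) (hy := rfl)
    have h2 : HasDerivWithinAt U (-(u' (t - T) * 1)) (Icc T (2 * T)) t :=
      hcomp.neg.congr (fun s hs => hUr s hs) (hUr t ht)
    simpa using h2
  have hVder_r : ∀ t ∈ Icc T (2 * T),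
      HasDerivWithinAt V (a (t - T) * u (t - T)) (Icc T (2 * T)) t := by
    intro t ht
    have hmem : t - T ∈ Icc (0:ℝ) T := hmaps ht
    have hcomp : HasDerivWithinAt (fun s => u' (s - T)) (-(a (t - T) * u (t - T)) * 1)
        (Icc T (2 * T)) t :=
      HasDerivWithinAt.comp_of_eq (hh₂ := hd2 (t - T) hmem)
        (hh := (hasDerivWithinAt_id t _).sub_const T) (hst := hmaps) (hy := rfl)
    have h2 : HasDerivWithinAt V (-(-(a (t - T) * u (t - T)) * 1)) (Icc T (2 * T)) t :=
      hcomp.neg.congr (fun s hs => hVr s hs) (hVr t ht)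
    simpa using h2
  have hUder_l : ∀ t ∈ Icc (0:ℝ) T, HasDerivWithinAt U (u' t) (Icc 0 T) t :=
    fun t ht => (hd1 t ht).congr (fun s hs => hUl s hs.2) (hUl t ht.2)
  have hVder_l : ∀ t ∈ Icc (0:ℝ) T, HasDerivWithinAt V (-(a t * u t)) (Icc 0 T) t :=
    fun t ht => (hd2 t ht).congr (fun s hs => hVl s hs.2) (hVl t ht.2)
  have hicc : Icc (0:ℝ) (2 * T) = Icc 0 T ∪ Icc T (2 * T) :=
    (Icc_union_Icc_eq_Icc hT.le (by linarith)).symm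
  -- full derivative of U
  have hd1big : ∀ t ∈ Icc (0:ℝ) (2 * T), HasDerivWithinAt U (V t) (Icc 0 (2 * T)) t := by
    intro t ht
    rcases lt_trichotomy t T with h | heq | h
    · rw [hVl t h.le]
      refine (hUder_l t ⟨ht.1, h.le⟩).mono_of_mem_nhdsWithin ?_
      rw [mem_nhdsWithin_iff_exists_mem_nhds_inter]
      exact ⟨Iio T, Iio_mem_nhds h, fun s hs => ⟨hs.2.1, hs.1.le⟩⟩
    · subst heq
      have h1 := hUder_l t ⟨hT.le, le_rfl⟩
      have h2 : HasDerivWithinAt U (u' t) (Icc t (2 * t)) t := by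
        have := hUder_r t ⟨le_rfl, by linarith⟩
        rw [sub_self, hu'0T, neg_neg] at this
        exact this
      rw [hVl t le_rfl, hicc]
      exact h1.union h2
    · rw [hVr t ⟨h.le, ht.2⟩]
      refine (hUder_r t ⟨h.le, ht.2⟩).mono_of_mem_nhdsWithin ?_
      rw [mem_nhdsWithin_iff_exists_mem_nhds_inter]
      exact ⟨Ioi T, Ioi_mem_nhds h, fun s hs => ⟨hs.1.le, hs.2.2⟩⟩
  -- full derivative of V away from T
  have hd2big : ∀ t ∈ Icc (0:ℝ) (2 * T), t ≠ T →
      HasDerivWithinAt V (-(A t * U t)) (Icc 0 (2 * T)) t := by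
    intro t ht htT
    rcases lt_or_gt_of_ne htT with h | h
    · rw [hAl t h.le, hUl t h.le]
      refine (hVder_l t ⟨ht.1, h.le⟩).mono_of_mem_nhdsWithin ?_
      rw [mem_nhdsWithin_iff_exists_mem_nhds_inter]
      exact ⟨Iio T, Iio_mem_nhds h, fun s hs => ⟨hs.2.1, hs.1.le⟩⟩
    · have hval : -(A t * U t) = a (t - T) * u (t - T) := by
        rw [hAr t h, hUr t ⟨h.le, ht.2⟩]
        ring
      rw [hval]
      refine (hVder_r t ⟨h.le, ht.2⟩).mono_of_mem_nhdsWithin ?_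
      rw [mem_nhdsWithin_iff_exists_mem_nhds_inter]
      exact ⟨Ioi T, Ioi_mem_nhds h, fun s hs => ⟨hs.1.le, hs.2.2⟩⟩
  -- continuity of V
  have hu'cont : ContinuousOn u' (Icc (0:ℝ) T) := fun t ht => (hd2 t ht).continuousWithinAt
  have hVcont : ContinuousOn V (Icc (0:ℝ) (2 * T)) := by
    rw [hicc]
    intro t ht
    apply ContinuousWithinAt.union
    · by_cases htT : t ∈ Icc (0:ℝ) T
      · exact (hu'cont t htT).congr (fun s hs => hVl s hs.2) (hVl t htT.2)
      · exact continuousWithinAt_of_notMem_closure (by rwa [isClosed_Icc.closure_eq])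
    · by_cases htT : t ∈ Icc T (2 * T)
      · have hcwa : ContinuousWithinAt (fun s => u' (s - T)) (Icc T (2 * T)) t :=
          ContinuousWithinAt.comp_of_eq (hu'cont (t - T) (hmaps htT))
            ((continuousWithinAt_id.sub continuousWithinAt_const)) hmaps rfl
        exact hcwa.neg.congr (fun s hs => hVr s hs) (hVr t htT)
      · exact continuousWithinAt_of_notMem_closure (by rwa [isClosed_Icc.closure_eq])
  -- continuity of A away from T
  have hAcont : ContinuousOn A (Icc (0:ℝ) (2 * T) \ {T}) := by
    rintro t ⟨ht, htT⟩
    rw [mem_singleton_iff] at htT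
    rcases lt_or_gt_of_ne htT with h | h
    · have hcwa : ContinuousWithinAt a (Icc (0:ℝ) T) t := ha t ⟨ht.1, h.le⟩
      have hsubs : (Icc (0:ℝ) (2 * T) \ {T}) ∩ Iio T ⊆ Icc (0:ℝ) T :=
        fun s hs => ⟨hs.1.1.1, hs.2.le⟩
      refine ((hcwa.mono hsubs).congr (fun s hs => hAl s hs.2.le)
        (hAl t h.le)).mono_of_mem_nhdsWithin ?_
      rw [mem_nhdsWithin_iff_exists_mem_nhds_inter]
      exact ⟨Iio T, Iio_mem_nhds h, fun s hs => ⟨hs.2, hs.1⟩⟩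
    · have hcwa : ContinuousWithinAt (fun s => a (s - T)) (Icc T (2 * T)) t :=
        ContinuousWithinAt.comp_of_eq (ha (t - T) (hmaps ⟨h.le, ht.2⟩))
          ((continuousWithinAt_id.sub continuousWithinAt_const)) hmaps rfl
      have hsubs : (Icc (0:ℝ) (2 * T) \ {T}) ∩ Ioi T ⊆ Icc T (2 * T) :=
        fun s hs => ⟨hs.2.le, hs.1.1.2⟩
      refine ((hcwa.mono hsubs).congr
        (fun s hs => hAr s hs.2) (hAr t h)).mono_of_mem_nhdsWithin ?_
      rw [mem_nhdsWithin_iff_exists_mem_nhds_inter]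
      exact ⟨Ioi T, Ioi_mem_nhds h, fun s hs => ⟨hs.2, hs.1⟩⟩
  -- integrability of A
  have haint : IntervalIntegrable a volume 0 T :=
    ContinuousOn.intervalIntegrable (by rw [uIcc_of_le hT.le]; exact ha)
  have hAint2 : IntervalIntegrable A volume 0 (2 * T) := by
    have hi1 : IntervalIntegrable A volume 0 T :=
      ContinuousOn.intervalIntegrable (by
        rw [uIcc_of_le hT.le]
        exact ha.congr (fun s hs => hAl s hs.2))
    have hi2 : IntervalIntegrable A volume T (2 * T) := by
      have hcont2 : ContinuousOn (fun s => a (s - T)) (Icc T (2 * T)) :=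
        ha.comp ((continuous_sub_right T).continuousOn) hmaps
      have hii : IntervalIntegrable (fun s => a (s - T)) volume T (2 * T) :=
        ContinuousOn.intervalIntegrable (by rw [uIcc_of_le (by linarith)]; exact hcont2)
      rw [intervalIntegrable_iff_integrableOn_Ioc_of_le (by linarith)] at hii ⊢
      exact hii.congr_fun (fun s hs => (hAr s hs.1).symm) measurableSet_Ioc
    exact hi1.trans hi2
  -- a zero of u
  have hucont : ContinuousOn u (Icc (0:ℝ) T) := fun t ht => (hd1 t ht).continuousWithinAt
  obtain ⟨z, hz, huz⟩ : ∃ z ∈ Icc (0:ℝ) T, u z = 0 := by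
    rcases le_total (u 0) 0 with h | h
    · obtain ⟨z, hzI, hz0⟩ := intermediate_value_Icc hT.le hucont ⟨h, by linarith⟩
      exact ⟨z, hzI, hz0⟩
    · obtain ⟨z, hzI, hz0⟩ := intermediate_value_Icc' hT.le hucont ⟨by linarith, h⟩
      exact ⟨z, hzI, hz0⟩
  -- apply the Dirichlet Lyapunov lemma on [z, z+T]
  have hsub : Icc z (z + T) ⊆ Icc (0:ℝ) (2 * T) :=
    Icc_subset_Icc hz.1 (by linarith [hz.2])
  have husub : uIcc z (z + T) ⊆ uIcc (0:ℝ) (2 * T) := by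
    rw [uIcc_of_le (by linarith : z ≤ z + T), uIcc_of_le (by linarith : (0:ℝ) ≤ 2 * T)]
    exact hsub
  have hres : 4 / (z + T - z) < ∫ t in z..(z + T), max (A t) 0 := by
    refine lyap (p := T) (by linarith) (hAcont.mono (diff_subset_diff_left hsub))
      (hAint2.mono_set husub) (hVcont.mono hsub)
      (fun t ht => (hd1big t (hsub ht)).mono hsub)
      (fun t ht htp => (hd2big t (hsub ht) htp).mono hsub)
      (by rw [hUl z hz.2, huz]) ?_ ?_
    · rw [hUr (z + T) ⟨by linarith [hz.1], by linarith [hz.2]⟩]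
      simp [huz]
    · obtain ⟨t₀, ht₀, hut₀⟩ := hne
      by_cases ht₀z : z ≤ t₀
      · exact ⟨t₀, ⟨ht₀z, by linarith [ht₀.2, hz.1]⟩, by rw [hUl t₀ ht₀.2]; exact hut₀⟩
      · push_neg at ht₀z
        refine ⟨t₀ + T, ⟨by linarith [ht₀.1, hz.2], by linarith⟩, ?_⟩
        rw [hUr (t₀ + T) ⟨by linarith [ht₀.1], by linarith [ht₀.2]⟩]
        simpa using hut₀
  rw [show z + T - z = T by ring] at hres
  -- transfer the integral back
  have hPz : IntervalIntegrable (fun t => max (A t) 0) volume z T :=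
    maxZero_intervalIntegrable (hAint2.mono_set (by
      rw [uIcc_of_le hz.2, uIcc_of_le (by linarith : (0:ℝ) ≤ 2 * T)]
      exact Icc_subset_Icc hz.1 (by linarith)))
  have hPT : IntervalIntegrable (fun t => max (A t) 0) volume T (z + T) :=
    maxZero_intervalIntegrable (hAint2.mono_set (by
      rw [uIcc_of_le (by linarith [hz.1] : T ≤ z + T),
        uIcc_of_le (by linarith : (0:ℝ) ≤ 2 * T)]
      exact Icc_subset_Icc hT.le (by linarith [hz.2])))
  have hsplit : (∫ t in z..T, max (A t) 0) + (∫ t in T..(z + T), max (A t) 0)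
      = ∫ t in z..(z + T), max (A t) 0 :=
    integral_add_adjacent_intervals hPz hPT
  have he1 : (∫ t in z..T, max (A t) 0) = ∫ t in z..T, max (a t) 0 := by
    apply intervalIntegral.integral_congr
    intro s hs
    rw [uIcc_of_le hz.2] at hs
    simp only
    rw [hAl s hs.2]
  have he2 : (∫ t in T..(z + T), max (A t) 0) = ∫ t in (0:ℝ)..z, max (a t) 0 := by
    have step1 : (∫ t in T..(z + T), max (A t) 0) = ∫ t in T..(z + T), max (a (t - T)) 0 := by
      rw [intervalIntegral.integral_of_le (by linarith [hz.1]),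
        intervalIntegral.integral_of_le (by linarith [hz.1])]
      apply setIntegral_congr_fun measurableSet_Ioc
      intro s hs
      simp only
      rw [hAr s hs.1]
    rw [step1, intervalIntegral.integral_comp_sub_right (fun s => max (a s) 0) T]
    norm_num
  have hfin : (∫ t in (0:ℝ)..z, max (a t) 0) + (∫ t in z..T, max (a t) 0)
      = ∫ t in (0:ℝ)..T, max (a t) 0 :=
    integral_add_adjacent_intervals
      (maxZero_intervalIntegrable (haint.mono_set (by
        rw [uIcc_of_le hz.1, uIcc_of_le hT.le]; exact Icc_subset_Icc le_rfl hz.2)))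
      (maxZero_intervalIntegrable (haint.mono_set (by
        rw [uIcc_of_le hz.2, uIcc_of_le hT.le]; exact Icc_subset_Icc hz.1 le_rfl)))
  linarith
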